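/- Let E be a real inner product space and let u, v ∈ E be unit vectors with angle θ ∈ (0, π) between them (⟨u, v⟩ = cos θ). Set T = v − u and define the adjoint scattering vector T′ = ‖T‖ · (v − (cos θ)·u)/‖v − (cos θ)·u‖. Then: (a) ⟨T′, u⟩ = 0; (b) ‖T′‖ = ‖T‖; (c) the angle between T and T′ equals θ/2; and (d) ‖T − T′‖ = 2·sin(θ/4)·‖T‖, so in particular ‖T − T′‖ ≤ (θ/2)·‖T‖. -/

import Mathlib

open Real

set_option maxHeartbeats 1000000 in
/-- The adjoint scattering vector: for unit vectors `u, v` with angle `θ ∈ (0, π)`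
between them (`⟪u, v⟫ = cos θ`), let `T = v − u` and
`T′ = ‖T‖ • (v − (cos θ) • u) / ‖v − (cos θ) • u‖`. Then `T′ ⊥ u`, `‖T′‖ = ‖T‖`,
the angle between `T` and `T′` is `θ/2`, and
`‖T − T′‖ = 2 sin(θ/4) ‖T‖ ≤ (θ/2) ‖T‖`. -/
theorem adjoint_scattering_vector {E : Type*} [NormedAddCommGroup E]
    [InnerProductSpace ℝ E] (u v : E) (hu : ‖u‖ = 1) (hv : ‖v‖ = 1)
    (θ : ℝ) (hθ0 : 0 < θ) (hθπ : θ < π)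
    (hangle : (inner ℝ u v : ℝ) = cos θ) (T T' : E) (hT : T = v - u)
    (hT' : T' = (‖T‖ / ‖v - cos θ • u‖) • (v - cos θ • u)) :
    (inner ℝ T' u : ℝ) = 0 ∧ ‖T'‖ = ‖T‖ ∧
      InnerProductGeometry.angle T T' = θ / 2 ∧
      ‖T - T'‖ = 2 * sin (θ / 4) * ‖T‖ ∧ ‖T - T'‖ ≤ θ / 2 * ‖T‖ := by
  have hvu : (inner ℝ v u : ℝ) = cos θ := by rw [real_inner_comm]; exact hangle
  have huu : (inner ℝ u u : ℝ) = 1 := by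
    rw [real_inner_self_eq_norm_sq, hu]; norm_num
  have hvv : (inner ℝ v v : ℝ) = 1 := by
    rw [real_inner_self_eq_norm_sq, hv]; norm_num
  have hsin : 0 < sin θ := Real.sin_pos_of_pos_of_lt_pi hθ0 hθπ
  have hs2 : 0 < sin (θ / 2) :=
    Real.sin_pos_of_pos_of_lt_pi (by linarith) (by linarith [Real.pi_pos])
  have hc2 : 0 < cos (θ / 2) := Real.cos_pos_of_mem_Ioo
    ⟨by linarith [Real.pi_pos], by linarith⟩
  -- norm of w = v - cos θ • u
  have hw2 : ‖v - cos θ • u‖ ^ 2 = sin θ ^ 2 := by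
    rw [← real_inner_self_eq_norm_sq]
    simp only [inner_sub_left, inner_sub_right, real_inner_smul_left,
      real_inner_smul_right, hvv, huu, hangle, hvu]
    nlinarith [Real.sin_sq_add_cos_sq θ]
  have hwnorm : ‖v - cos θ • u‖ = sin θ := by
    have h1 : Real.sqrt (‖v - cos θ • u‖ ^ 2) = ‖v - cos θ • u‖ :=
      Real.sqrt_sq (norm_nonneg _)
    rw [← h1, hw2, Real.sqrt_sq hsin.le]
  -- norm of T
  have hcosθ : cos θ = 1 - 2 * sin (θ / 2) ^ 2 := by
    have h1 := Real.cos_sq (θ / 2)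
    rw [show 2 * (θ / 2) = θ by ring] at h1
    have h2 := Real.sin_sq_add_cos_sq (θ / 2)
    linarith
  have hT2 : ‖T‖ ^ 2 = (2 * sin (θ / 2)) ^ 2 := by
    rw [hT, ← real_inner_self_eq_norm_sq]
    simp only [inner_sub_left, inner_sub_right, hvv, huu, hangle, hvu]
    nlinarith
  have hTnorm : ‖T‖ = 2 * sin (θ / 2) := by
    have h1 : Real.sqrt (‖T‖ ^ 2) = ‖T‖ := Real.sqrt_sq (norm_nonneg _)
    rw [← h1, hT2, Real.sqrt_sq (by linarith)]
  have hTpos : 0 < ‖T‖ := by rw [hTnorm]; linarith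
  -- (a)
  have ha : (inner ℝ T' u : ℝ) = 0 := by
    rw [hT']
    simp only [real_inner_smul_left, inner_sub_left, real_inner_smul_left,
      hvu, huu]
    ring
  -- (b)
  have hb : ‖T'‖ = ‖T‖ := by
    rw [hT', norm_smul, hwnorm, Real.norm_eq_abs,
      abs_of_nonneg (by positivity : (0:ℝ) ≤ ‖T‖ / sin θ)]
    field_simp
  -- inner T T'
  have hinner : (inner ℝ T T' : ℝ) = ‖T‖ * sin θ := by
    rw [hT, hT', hwnorm]
    simp only [real_inner_smul_right, inner_sub_left, inner_sub_right,
      real_inner_smul_right, hvv, huu, hangle, hvu]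
    rw [← hT]
    have hsc := Real.sin_sq_add_cos_sq θ
    field_simp
    nlinarith [hsc, hTpos.le]
  -- (c)
  have hsinθ : sin θ = 2 * sin (θ / 2) * cos (θ / 2) := by
    have := Real.sin_two_mul (θ / 2)
    rw [show 2 * (θ / 2) = θ by ring] at this
    linarith
  have hcosratio : (inner ℝ T T' : ℝ) / (‖T‖ * ‖T'‖) = cos (θ / 2) := by
    rw [hinner, hb, hTnorm, hsinθ]
    field_simp
  have hc : InnerProductGeometry.angle T T' = θ / 2 := by
    rw [InnerProductGeometry.angle, hcosratio,
      Real.arccos_cos (by linarith) (by linarith)]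
  -- (d)
  have hs4 : 0 ≤ sin (θ / 4) :=
    Real.sin_nonneg_of_nonneg_of_le_pi (by linarith) (by linarith [Real.pi_pos])
  have hcos2 : cos (θ / 2) = 1 - 2 * sin (θ / 4) ^ 2 := by
    have h1 := Real.cos_sq (θ / 4)
    rw [show 2 * (θ / 4) = θ / 2 by ring] at h1
    have h2 := Real.sin_sq_add_cos_sq (θ / 4)
    linarith
  have hd2 : ‖T - T'‖ ^ 2 = (2 * sin (θ / 4) * ‖T‖) ^ 2 := by
    rw [← real_inner_self_eq_norm_sq]
    have : (inner ℝ (T - T') (T - T') : ℝ) =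
        ‖T‖ ^ 2 - 2 * (inner ℝ T T' : ℝ) + ‖T'‖ ^ 2 := by
      simp only [inner_sub_left, inner_sub_right]
      rw [real_inner_self_eq_norm_sq, real_inner_self_eq_norm_sq,
        real_inner_comm T' T]
      ring
    rw [this, hinner, hb, hTnorm, hsinθ]
    linear_combination (-8 * sin (θ / 2) ^ 2) * hcos2
  have hd : ‖T - T'‖ = 2 * sin (θ / 4) * ‖T‖ := by
    have h1 : Real.sqrt (‖T - T'‖ ^ 2) = ‖T - T'‖ := Real.sqrt_sq (norm_nonneg _)
    have hnn : (0:ℝ) ≤ 2 * sin (θ / 4) * ‖T‖ :=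
      mul_nonneg (mul_nonneg (by norm_num) hs4) hTpos.le
    rw [← h1, hd2, Real.sqrt_sq hnn]
  refine ⟨ha, hb, hc, hd, ?_⟩
  rw [hd]
  have : sin (θ / 4) ≤ θ / 4 := Real.sin_le (by linarith)
  nlinarith
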